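/- Let 1≤q<∞ and φ ∈ G_q. Then there exists a constant C>0, depending only on n and q, such that for every measurable f:ℝⁿ→ℂ, ‖Mf‖_{wM^φ_q} ≤ C‖f‖_{M^φ_q}, where M is the uncentered Hardy–Littlewood maximal operator over Euclidean balls and ‖·‖_{wM^φ_q} is the weak generalized Morrey norm. -/

import Mathlib

open MeasureTheory Set
open scoped ENNReal NNReal

/-- The generalized Morrey norm `‖f‖_{M^φ_q}` on `ℝⁿ` (cubes realized as closed balls
for the sup metric on `Fin n → ℝ`). -/
noncomputable def morreyNorm (n : ℕ) (q : ℝ) (φ : ℝ → ℝ)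
    (f : (Fin n → ℝ) → ℂ) : ℝ≥0∞ :=
  ⨆ (x : Fin n → ℝ) (r : ℝ) (_ : 0 < r),
    ENNReal.ofReal (φ r) *
      ((volume (Metric.closedBall x r))⁻¹ *
        ∫⁻ y in Metric.closedBall x r, (‖f y‖₊ : ℝ≥0∞) ^ q) ^ (1 / q)

/-- The generalized Morrey norm of an `ℝ≥0∞`-valued function. -/
noncomputable def morreyNormE (n : ℕ) (q : ℝ) (φ : ℝ → ℝ)
    (F : (Fin n → ℝ) → ℝ≥0∞) : ℝ≥0∞ :=
  ⨆ (x : Fin n → ℝ) (r : ℝ) (_ : 0 < r),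
    ENNReal.ofReal (φ r) *
      ((volume (Metric.closedBall x r))⁻¹ *
        ∫⁻ y in Metric.closedBall x r, (F y) ^ q) ^ (1 / q)

/-- The weak generalized Morrey norm of an `ℝ≥0∞`-valued function:
`sup_{λ>0} λ ‖χ_{{F>λ}}‖_{M^φ_q}`. -/
noncomputable def weakMorreyNormE (n : ℕ) (q : ℝ) (φ : ℝ → ℝ)
    (F : (Fin n → ℝ) → ℝ≥0∞) : ℝ≥0∞ :=
  ⨆ (lam : ℝ) (_ : 0 < lam),
    ENNReal.ofReal lam *
      morreyNormE n q φ
        (Set.indicator {x | ENNReal.ofReal lam < F x} (fun _ => 1))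

/-- The class `G_q`: nondecreasing functions `φ : (0,∞) → (0,∞)` such that
`t ↦ t^{-n/q} φ(t)` is nonincreasing on `(0,∞)`. -/
def IsGq (n : ℕ) (q : ℝ) (φ : ℝ → ℝ) : Prop :=
  (∀ t, 0 < t → 0 < φ t) ∧
  (∀ s t, 0 < s → s ≤ t → φ s ≤ φ t) ∧
  (∀ s t, 0 < s → s ≤ t → t ^ (-((n : ℝ) / q)) * φ t ≤ s ^ (-((n : ℝ) / q)) * φ s)

/-- The (open) Euclidean ball in `Fin n → ℝ`. -/
def euclBall (n : ℕ) (c : Fin n → ℝ) (r : ℝ) : Set (Fin n → ℝ) :=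
  {y | Real.sqrt (∑ j, (y j - c j) ^ 2) < r}

/-- The uncentered Hardy--Littlewood maximal operator over Euclidean balls. -/
noncomputable def hlMaximal (n : ℕ) (f : (Fin n → ℝ) → ℂ)
    (x : Fin n → ℝ) : ℝ≥0∞ :=
  ⨆ (c : Fin n → ℝ) (r : ℝ) (_ : 0 < r) (_ : x ∈ euclBall n c r),
    (volume (euclBall n c r))⁻¹ * ∫⁻ y in euclBall n c r, (‖f y‖₊ : ℝ≥0∞)

section Aux
variable {n : ℕ}

/-- The identity measurable equivalence to Euclidean space. -/
noncomputable def toE (n : ℕ) : (Fin n → ℝ) ≃ᵐ EuclideanSpace ℝ (Fin n) :=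
  MeasurableEquiv.toLp 2 (Fin n → ℝ)

lemma toE_mp (n : ℕ) : MeasureTheory.MeasurePreserving (toE n) volume volume :=
  (EuclideanSpace.volume_preserving_symm_measurableEquiv_toLp (Fin n)).symm

lemma toE_apply (a : Fin n → ℝ) (j : Fin n) : toE n a j = a j := rfl

lemma dist_toE (a b : Fin n → ℝ) :
    dist (toE n a) (toE n b) = Real.sqrt (∑ j, (a j - b j) ^ 2) := by
  rw [EuclideanSpace.dist_eq]
  simp only [Real.dist_eq, sq_abs, toE_apply]

lemma euclBall_eq (c : Fin n → ℝ) (ρ : ℝ) :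
    euclBall n c ρ = (toE n) ⁻¹' Metric.ball (toE n c) ρ := by
  ext y
  simp only [euclBall, mem_setOf_eq, mem_preimage, Metric.mem_ball, dist_toE]

/-- The closed Euclidean ball as a subset of `Fin n → ℝ`. -/
def eCB (n : ℕ) (c : Fin n → ℝ) (s : ℝ) : Set (Fin n → ℝ) :=
  (toE n) ⁻¹' Metric.closedBall (toE n c) s

lemma mem_eCB {c y : Fin n → ℝ} {s : ℝ} :
    y ∈ eCB n c s ↔ Real.sqrt (∑ j, (y j - c j) ^ 2) ≤ s := by
  simp only [eCB, mem_preimage, Metric.mem_closedBall, dist_toE]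

lemma volume_euclBall (c : Fin n → ℝ) {ρ : ℝ} (hρ : 0 < ρ) :
    volume (euclBall n c ρ) =
      ENNReal.ofReal (ρ ^ n) * volume (Metric.ball (0 : EuclideanSpace ℝ (Fin n)) 1) := by
  rw [euclBall_eq, (toE_mp n).measure_preimage measurableSet_ball.nullMeasurableSet,
    Measure.addHaar_ball_of_pos _ _ hρ, finrank_euclideanSpace_fin]

lemma volume_eCB (c : Fin n → ℝ) {s : ℝ} (hs : 0 ≤ s) :
    volume (eCB n c s) =
      ENNReal.ofReal (s ^ n) * volume (Metric.ball (0 : EuclideanSpace ℝ (Fin n)) 1) := by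
  rw [eCB, (toE_mp n).measure_preimage measurableSet_closedBall.nullMeasurableSet,
    Measure.addHaar_closedBall _ _ hs, finrank_euclideanSpace_fin]

lemma isOpen_euclBall (c : Fin n → ℝ) (ρ : ℝ) : IsOpen (euclBall n c ρ) := by
  have : Continuous fun y : Fin n → ℝ => Real.sqrt (∑ j, (y j - c j) ^ 2) := by
    apply Real.continuous_sqrt.comp
    exact continuous_finset_sum _ fun j _ => (((continuous_apply j).sub continuous_const).pow 2)
  exact isOpen_lt this continuous_const

lemma measurableSet_euclBall (c : Fin n → ℝ) (ρ : ℝ) : MeasurableSet (euclBall n c ρ) :=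
  (isOpen_euclBall c ρ).measurableSet

lemma measurableSet_eCB (c : Fin n → ℝ) (s : ℝ) : MeasurableSet (eCB n c s) :=
  (toE n).measurable measurableSet_closedBall

/-- sup distance is at most Euclidean distance. -/
lemma dist_le_sqrtSum (a b : Fin n → ℝ) : dist a b ≤ Real.sqrt (∑ j, (a j - b j) ^ 2) := by
  refine dist_pi_le_iff (Real.sqrt_nonneg _) |>.2 fun j => ?_
  rw [Real.dist_eq, ← Real.sqrt_sq_eq_abs (a j - b j)]
  exact Real.sqrt_le_sqrt (Finset.single_le_sum (f := fun j => (a j - b j)^2)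
    (fun i _ => sq_nonneg _) (Finset.mem_univ j))

lemma euclBall_subset_eCB (c : Fin n → ℝ) (ρ : ℝ) : euclBall n c ρ ⊆ eCB n c ρ := by
  intro y hy
  exact mem_eCB.2 (le_of_lt hy)

lemma eCB_subset_cube (c : Fin n → ℝ) {s : ℝ} (_hs : 0 ≤ s) :
    eCB n c s ⊆ Metric.closedBall c s := by
  intro y hy
  rw [Metric.mem_closedBall]
  exact (dist_le_sqrtSum y c).trans (mem_eCB.1 hy)

end Aux
section Holder

open ENNReal in
lemma lintegral_le_lintegral_rpow {α : Type*} [MeasurableSpace α] (μ : Measure α) {q : ℝ}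
    (hq : 1 ≤ q) {g : α → ℝ≥0∞} (hg : AEMeasurable g μ) :
    ∫⁻ a, g a ∂μ ≤ (∫⁻ a, g a ^ q ∂μ) ^ (1 / q) * (μ univ) ^ (1 - 1 / q) := by
  rcases eq_or_lt_of_le hq with h1 | h1
  · subst h1
    simp [ENNReal.rpow_one]
  · have hc := Real.HolderConjugate.conjExponent h1
    have H := ENNReal.lintegral_mul_le_Lp_mul_Lq μ hc hg
      (aemeasurable_const (b := (1 : ℝ≥0∞)))
    simp only [Pi.mul_apply, Pi.one_apply, mul_one, ENNReal.one_rpow, lintegral_one] at H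
    have h1q : 1 / q.conjExponent = 1 - 1 / q := by
      rw [Real.conjExponent]
      have hq0 : q ≠ 0 := by linarith
      have hq1 : q - 1 ≠ 0 := by intro h; rw [sub_eq_zero] at h; exact absurd h.symm h1.ne
      field_simp
    rwa [h1q] at H

open ENNReal in
lemma avg_le_avg_rpow {α : Type*} [MeasurableSpace α] (μ : Measure α) {q : ℝ}
    (hq : 1 ≤ q) {g : α → ℝ≥0∞} (hg : AEMeasurable g μ)
    (h0 : μ univ ≠ 0) (ht : μ univ ≠ ∞) :
    (μ univ)⁻¹ * ∫⁻ a, g a ∂μ ≤ ((μ univ)⁻¹ * ∫⁻ a, g a ^ q ∂μ) ^ (1 / q) := by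
  have hq0 : (0:ℝ) ≤ 1 / q := by positivity
  rw [ENNReal.mul_rpow_of_nonneg _ _ hq0]
  calc (μ univ)⁻¹ * ∫⁻ a, g a ∂μ
      ≤ (μ univ)⁻¹ * ((∫⁻ a, g a ^ q ∂μ) ^ (1/q) * (μ univ) ^ (1 - 1/q)) :=
        mul_le_mul_right (lintegral_le_lintegral_rpow μ hq hg) _
    _ = ((μ univ)⁻¹ * (μ univ) ^ (1 - 1/q)) * (∫⁻ a, g a ^ q ∂μ) ^ (1/q) := by ring
    _ = ((μ univ)⁻¹) ^ (1/q) * (∫⁻ a, g a ^ q ∂μ) ^ (1/q) := by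
        congr 1
        rw [← ENNReal.rpow_neg_one (μ univ), ← ENNReal.rpow_add _ _ h0 ht,
          ← ENNReal.rpow_mul]
        congr 1
        ring
end Holder
open ENNReal in
lemma aux_unavg {q : ℝ} (hq : 1 ≤ q) {a V I Nv : ℝ≥0∞} (hV0 : V ≠ 0) (hVt : V ≠ ∞)
    (h : a * (V⁻¹ * I) ^ (1 / q) ≤ Nv) : a ^ q * I ≤ Nv ^ q * V := by
  have hqne : q ≠ 0 := by positivity
  have h2 := ENNReal.rpow_le_rpow h (le_trans zero_le_one hq)
  rw [ENNReal.mul_rpow_of_nonneg _ _ (le_trans zero_le_one hq), ← ENNReal.rpow_mul,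
    one_div_mul_cancel hqne, ENNReal.rpow_one] at h2
  calc a ^ q * I = (a ^ q * (V⁻¹ * I)) * V := by
        rw [mul_assoc, mul_comm _ V, ← mul_assoc V, ENNReal.mul_inv_cancel hV0 hVt, one_mul]
    _ ≤ Nv ^ q * V := mul_le_mul_left h2 _

open ENNReal in
lemma aux_avg_pow {q : ℝ} (hq : 1 ≤ q) {a V I Nv : ℝ≥0∞} (hV0 : V ≠ 0) (hVt : V ≠ ∞)
    (h : a ^ q * I ≤ Nv ^ q * V) : a * (V⁻¹ * I) ^ (1 / q) ≤ Nv := by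
  have hqpos : (0:ℝ) < q := by positivity
  rw [← ENNReal.rpow_le_rpow_iff hqpos,
    ENNReal.mul_rpow_of_nonneg _ _ hqpos.le, ← ENNReal.rpow_mul, one_div_mul_cancel hqpos.ne',
    ENNReal.rpow_one]
  calc a ^ q * (V⁻¹ * I) ≤ V⁻¹ * (Nv ^ q * V) := by
        rw [mul_comm (a ^ q) _, mul_assoc, mul_comm I (a ^ q)]
        exact mul_le_mul_right h _
    _ = Nv ^ q := by
        rw [mul_comm (Nv ^ q) V, ← mul_assoc, ENNReal.inv_mul_cancel hV0 hVt, one_mul]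

open ENNReal in
lemma aux_cheb {q : ℝ} (hq : 1 ≤ q) {a V I : ℝ≥0∞} (hV0 : V ≠ 0) (hVt : V ≠ ∞)
    (h : a ≤ (V⁻¹ * I) ^ (1 / q)) : a ^ q * V ≤ I := by
  have h2 := ENNReal.rpow_le_rpow h (le_trans zero_le_one hq)
  rw [← ENNReal.rpow_mul, one_div_mul_cancel (by positivity), ENNReal.rpow_one] at h2
  calc a ^ q * V ≤ (V⁻¹ * I) * V := mul_le_mul_left h2 _
    _ = I * (V⁻¹ * V) := by ring
    _ = I := by rw [ENNReal.inv_mul_cancel hV0 hVt, mul_one]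

/-- for `1 ≤ q < ∞` there is a constant `C > 0`, depending only
on `n` and `q`, such that for every `φ ∈ G_q` and every measurable `f`,
`‖Mf‖_{wM^φ_q} ≤ C ‖f‖_{M^φ_q}`. -/
theorem maximal_weak_bounded_morrey (n : ℕ) (q : ℝ) (hq : 1 ≤ q) :
    ∃ C : ℝ, 0 < C ∧ ∀ φ : ℝ → ℝ, IsGq n q φ →
      ∀ f : (Fin n → ℝ) → ℂ, Measurable f →
        weakMorreyNormE n q φ (hlMaximal n f) ≤
          ENNReal.ofReal C * morreyNorm n q φ f := by
  classical
  have hqpos : (0:ℝ) < q := lt_of_lt_of_le one_pos hq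
  have hqne : q ≠ 0 := hqpos.ne'
  set v0 : ℝ≥0∞ := volume (Metric.ball (0 : EuclideanSpace ℝ (Fin n)) 1) with hv0def
  have hv00 : v0 ≠ 0 := (Metric.measure_ball_pos _ _ one_pos).ne'
  have hv0t : v0 ≠ ∞ := measure_ball_lt_top.ne
  set v : ℝ := v0.toReal with hvdef
  have hv : 0 < v := ENNReal.toReal_pos hv00 hv0t
  have hv0eq : v0 = ENNReal.ofReal v := (ENNReal.ofReal_toReal hv0t).symm
  set c1 : ℝ := 2 ^ ((n:ℝ)/q) * (2 ^ n / v) with hc1def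
  have hc1 : 0 < c1 := by positivity
  set C : ℝ := 2 * c1 + (8:ℝ) ^ ((n:ℝ)/q) + 1 with hCdef
  have hC : 0 < C := by positivity
  refine ⟨C, hC, ?_⟩
  intro φ hφ f hf
  obtain ⟨hφ0, hφm, hφd⟩ := hφ
  set N := morreyNorm n q φ f with hNdef
  by_cases hNtop : N = ∞
  · rw [hNtop, ENNReal.mul_top (by simpa using (ENNReal.ofReal_pos.2 hC).ne')]
    exact le_top
  -- volume of cubes
  have hVQ : ∀ (c : Fin n → ℝ) {ρ : ℝ}, 0 ≤ ρ →
      volume (Metric.closedBall c ρ) = ENNReal.ofReal ((2*ρ)^n) := by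
    intro c ρ hρ
    rw [Real.volume_pi_closedBall c hρ, Fintype.card_fin]
  have hVQ0 : ∀ (c : Fin n → ℝ) {ρ : ℝ}, 0 < ρ → volume (Metric.closedBall c ρ) ≠ 0 := by
    intro c ρ hρ
    rw [hVQ c hρ.le]
    simp only [ne_eq, ENNReal.ofReal_eq_zero, not_le]
    positivity
  have hVQt : ∀ (c : Fin n → ℝ) (ρ : ℝ), volume (Metric.closedBall c ρ) ≠ ∞ :=
    fun c ρ => (Metric.isBounded_closedBall).measure_lt_top.ne
  -- the basic Morrey estimate on cubes
  have hNle : ∀ (c : Fin n → ℝ) (ρ : ℝ), 0 < ρ →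
      ENNReal.ofReal (φ ρ) * ((volume (Metric.closedBall c ρ))⁻¹ *
        ∫⁻ y in Metric.closedBall c ρ, (‖f y‖₊ : ℝ≥0∞) ^ q) ^ (1/q) ≤ N := by
    intro c ρ hρ
    rw [hNdef, morreyNorm]
    exact le_iSup_of_le c (le_iSup_of_le ρ (le_iSup_of_le hρ le_rfl))
  have hNq : ∀ (c : Fin n → ℝ) (ρ : ℝ), 0 < ρ →
      (ENNReal.ofReal (φ ρ)) ^ q * ∫⁻ y in Metric.closedBall c ρ, (‖f y‖₊ : ℝ≥0∞) ^ q ≤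
        N ^ q * volume (Metric.closedBall c ρ) :=
    fun c ρ hρ => aux_unavg hq (hVQ0 c hρ) (hVQt c ρ) (hNle c ρ hρ)
  -- Step A : large balls
  have stepA : ∀ (c : Fin n → ℝ) (ρ : ℝ), 0 < ρ → ∀ r' : ℝ, 0 < r' → r'/2 ≤ ρ →
      ENNReal.ofReal (φ r') * ((volume (euclBall n c ρ))⁻¹ *
        ∫⁻ y in euclBall n c ρ, (‖f y‖₊ : ℝ≥0∞)) ≤ ENNReal.ofReal c1 * N := by
    intro c ρ hρ r' hr' hhalf
    have h1q0 : (0:ℝ) ≤ 1/q := by positivity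
    have hBQ : euclBall n c ρ ⊆ Metric.closedBall c ρ :=
      (euclBall_subset_eCB c ρ).trans (eCB_subset_cube c hρ.le)
    have hVB : volume (euclBall n c ρ) = ENNReal.ofReal (ρ^n) * v0 := volume_euclBall c hρ
    have h1 : ∫⁻ y in euclBall n c ρ, (‖f y‖₊:ℝ≥0∞) ≤
        ∫⁻ y in Metric.closedBall c ρ, (‖f y‖₊:ℝ≥0∞) := lintegral_mono_set hBQ
    have h2 : ∫⁻ y in Metric.closedBall c ρ, (‖f y‖₊:ℝ≥0∞) ≤
        (∫⁻ y in Metric.closedBall c ρ, (‖f y‖₊:ℝ≥0∞)^q)^(1/q) *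
          (volume (Metric.closedBall c ρ))^(1-1/q) := by
      have := lintegral_le_lintegral_rpow (volume.restrict (Metric.closedBall c ρ)) hq
        (g := fun y => (‖f y‖₊:ℝ≥0∞)) hf.nnnorm.coe_nnreal_ennreal.aemeasurable
      simpa [Measure.restrict_apply_univ] using this
    have h3 : ENNReal.ofReal (φ ρ) *
        (∫⁻ y in Metric.closedBall c ρ, (‖f y‖₊:ℝ≥0∞)^q)^(1/q) ≤
          N * (volume (Metric.closedBall c ρ))^(1/q) := by
      have h' := ENNReal.rpow_le_rpow (hNq c ρ hρ) h1q0
      rw [ENNReal.mul_rpow_of_nonneg _ _ h1q0, ENNReal.mul_rpow_of_nonneg _ _ h1q0,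
        ← ENNReal.rpow_mul, ← ENNReal.rpow_mul, mul_one_div_cancel hqne, ENNReal.rpow_one,
        ENNReal.rpow_one] at h'
      exact h'
    have hφr : φ r' ≤ 2^((n:ℝ)/q) * φ (r'/2) := by
      have hd := hφd (r'/2) r' (half_pos hr') (by linarith)
      set a : ℝ := (n:ℝ)/q with hadef
      have ha : 0 ≤ a := by positivity
      have hpow : r' ^ a * (r'/2) ^ (-a) = 2 ^ a := by
        rw [Real.rpow_neg (by linarith), ← div_eq_mul_inv, ← Real.div_rpow hr'.le (by linarith : (0:ℝ) ≤ r'/2)]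
        · congr 1
          field_simp
      have h5 := mul_le_mul_of_nonneg_left hd (Real.rpow_nonneg (le_of_lt hr') a)
      rw [← mul_assoc, ← mul_assoc, ← Real.rpow_add hr', add_neg_cancel, Real.rpow_zero,
        one_mul, hpow] at h5
      exact h5
    have hφr2 : φ r' ≤ 2^((n:ℝ)/q) * φ ρ := by
      have := hφm (r'/2) ρ (half_pos hr') hhalf
      nlinarith [Real.rpow_nonneg (by norm_num : (0:ℝ) ≤ 2) ((n:ℝ)/q)]
    have hcst : ENNReal.ofReal (2^((n:ℝ)/q)) *
        ((volume (euclBall n c ρ))⁻¹ * volume (Metric.closedBall c ρ)) = ENNReal.ofReal c1 := by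
      rw [hVB, hVQ c hρ.le, hv0eq, ← ENNReal.ofReal_mul (by positivity),
        ← ENNReal.ofReal_inv_of_pos (by positivity),
        ← ENNReal.ofReal_mul (by positivity), ← ENNReal.ofReal_mul (by positivity)]
      congr 1
      rw [hc1def]
      rw [mul_pow]
      field_simp
    calc ENNReal.ofReal (φ r') *
        ((volume (euclBall n c ρ))⁻¹ * ∫⁻ y in euclBall n c ρ, (‖f y‖₊:ℝ≥0∞))
        ≤ (ENNReal.ofReal (2^((n:ℝ)/q)) * ENNReal.ofReal (φ ρ)) *
          ((volume (euclBall n c ρ))⁻¹ * ∫⁻ y in Metric.closedBall c ρ, (‖f y‖₊:ℝ≥0∞)) := by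
          rw [← ENNReal.ofReal_mul (by positivity)]
          exact mul_le_mul' (ENNReal.ofReal_le_ofReal hφr2) (mul_le_mul_right h1 _)
      _ ≤ (ENNReal.ofReal (2^((n:ℝ)/q)) * ENNReal.ofReal (φ ρ)) *
          ((volume (euclBall n c ρ))⁻¹ *
            ((∫⁻ y in Metric.closedBall c ρ, (‖f y‖₊:ℝ≥0∞)^q)^(1/q) *
              (volume (Metric.closedBall c ρ))^(1-1/q))) :=
          mul_le_mul_right (mul_le_mul_right h2 _) _
      _ = (ENNReal.ofReal (2^((n:ℝ)/q)) *
            ((volume (euclBall n c ρ))⁻¹ * (volume (Metric.closedBall c ρ))^(1-1/q))) *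
          (ENNReal.ofReal (φ ρ) *
            (∫⁻ y in Metric.closedBall c ρ, (‖f y‖₊:ℝ≥0∞)^q)^(1/q)) := by ring
      _ ≤ (ENNReal.ofReal (2^((n:ℝ)/q)) *
            ((volume (euclBall n c ρ))⁻¹ * (volume (Metric.closedBall c ρ))^(1-1/q))) *
          (N * (volume (Metric.closedBall c ρ))^(1/q)) := mul_le_mul_right h3 _
      _ = (ENNReal.ofReal (2^((n:ℝ)/q)) *
            ((volume (euclBall n c ρ))⁻¹ *
              ((volume (Metric.closedBall c ρ))^(1-1/q) *
                (volume (Metric.closedBall c ρ))^(1/q)))) * N := by ring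
      _ = ENNReal.ofReal c1 * N := by
          rw [← ENNReal.rpow_add _ _ (hVQ0 c hρ) (hVQt c ρ)]
          norm_num
          rw [hcst]

  -- main supremum reduction
  rw [weakMorreyNormE]
  refine iSup_le fun lam => iSup_le fun hlam => ?_
  rw [morreyNormE]
  simp only [ENNReal.mul_iSup]
  refine iSup_le fun x => iSup_le fun r => iSup_le fun hr => ?_
  set E : Set (Fin n → ℝ) := {y | ENNReal.ofReal lam < hlMaximal n f y} with hEdef
  have hEopen : IsOpen E := by
    refine isOpen_iff_mem_nhds.2 fun y hy => ?_
    simp only [hEdef, mem_setOf_eq, hlMaximal, lt_iSup_iff] at hy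
    obtain ⟨c, ρ, hρ, hmem, hlt⟩ := hy
    refine mem_nhds_iff.2 ⟨euclBall n c ρ, fun z hz => ?_, isOpen_euclBall c ρ, hmem⟩
    show ENNReal.ofReal lam < hlMaximal n f z
    exact lt_of_lt_of_le hlt
      (le_iSup_of_le c (le_iSup_of_le ρ (le_iSup_of_le hρ (le_iSup_of_le hz le_rfl))))
  have hE : MeasurableSet E := hEopen.measurableSet
  have hind : (∫⁻ y in Metric.closedBall x r,
      (Set.indicator E (fun _ => (1:ℝ≥0∞)) y) ^ q) = volume (E ∩ Metric.closedBall x r) := by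
    have h1 : ∀ y, (Set.indicator E (fun _ => (1:ℝ≥0∞)) y) ^ q
        = Set.indicator E (fun _ => (1:ℝ≥0∞)) y := by
      intro y
      by_cases hy : y ∈ E
      · simp [hy]
      · simp [hy, ENNReal.zero_rpow_of_pos hqpos]
    simp_rw [h1]
    rw [lintegral_indicator hE, Measure.restrict_restrict hE, setLIntegral_one]
  rw [hind]
  have hQ0 : volume (Metric.closedBall x r) ≠ 0 := hVQ0 x hr
  have hQt : volume (Metric.closedBall x r) ≠ ∞ := hVQt x r
  have hφrpos : 0 < φ r := hφ0 r hr
  by_cases hcase : ENNReal.ofReal lam * ENNReal.ofReal (φ r) ≤ ENNReal.ofReal (2*c1) * N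
  · -- trivial case : lam · φ(r) is small
    have hX : ((volume (Metric.closedBall x r))⁻¹ * volume (E ∩ Metric.closedBall x r)) ^ (1/q)
        ≤ 1 := by
      apply ENNReal.rpow_le_one _ (by positivity)
      calc (volume (Metric.closedBall x r))⁻¹ * volume (E ∩ Metric.closedBall x r)
          ≤ (volume (Metric.closedBall x r))⁻¹ * volume (Metric.closedBall x r) :=
            mul_le_mul_right (measure_mono inter_subset_right) _
        _ = 1 := ENNReal.inv_mul_cancel hQ0 hQt
    calc ENNReal.ofReal lam * (ENNReal.ofReal (φ r) *
          ((volume (Metric.closedBall x r))⁻¹ * volume (E ∩ Metric.closedBall x r)) ^ (1/q))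
        ≤ ENNReal.ofReal lam * (ENNReal.ofReal (φ r) * 1) :=
          mul_le_mul_right (mul_le_mul_right hX _) _
      _ = ENNReal.ofReal lam * ENNReal.ofReal (φ r) := by rw [mul_one]
      _ ≤ ENNReal.ofReal (2*c1) * N := hcase
      _ ≤ ENNReal.ofReal C * N := by
          refine mul_le_mul_left (ENNReal.ofReal_le_ofReal ?_) _
          have h8 : (0:ℝ) < (8:ℝ) ^ ((n:ℝ)/q) := by positivity
          rw [hCdef]; linarith
  · push_neg at hcase
    -- every ball witnessing `Mf > lam` has radius < r/2
    have hsmall : ∀ (c : Fin n → ℝ) (ρ : ℝ), 0 < ρ →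
        ENNReal.ofReal lam < (volume (euclBall n c ρ))⁻¹ *
          ∫⁻ y in euclBall n c ρ, (‖f y‖₊ : ℝ≥0∞) → ρ < r/2 := by
      intro c ρ hρ hlt
      by_contra hge
      push_neg at hge
      have hA := stepA c ρ hρ r hr hge
      set A := (volume (euclBall n c ρ))⁻¹ * ∫⁻ y in euclBall n c ρ, (‖f y‖₊ : ℝ≥0∞) with hAdef
      have h2A : ENNReal.ofReal (φ r) * (2 * A) ≤ ENNReal.ofReal (2*c1) * N := by
        rw [ENNReal.ofReal_mul (by norm_num : (0:ℝ) ≤ 2)]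
        calc ENNReal.ofReal (φ r) * (2 * A) = 2 * (ENNReal.ofReal (φ r) * A) := by ring
          _ ≤ 2 * (ENNReal.ofReal c1 * N) := mul_le_mul_right hA _
          _ = ENNReal.ofReal 2 * ENNReal.ofReal c1 * N := by
              rw [ENNReal.ofReal_ofNat]; ring
      have hlt2 : ENNReal.ofReal (φ r) * (2 * A) < ENNReal.ofReal (φ r) * ENNReal.ofReal lam :=
        lt_of_le_of_lt h2A (by rw [mul_comm (ENNReal.ofReal lam)] at hcase; exact hcase)
      have h2Alam : 2 * A < ENNReal.ofReal lam := by
        have hφne : ENNReal.ofReal (φ r) ≠ 0 := by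
          simp only [ne_eq, ENNReal.ofReal_eq_zero, not_le]; exact hφrpos
        exact (ENNReal.mul_right_strictMono hφne ENNReal.ofReal_ne_top).lt_iff_lt.1 hlt2
      have : A < ENNReal.ofReal lam := lt_of_le_of_lt (le_mul_of_one_le_left (by positivity) one_le_two) h2Alam
      exact absurd hlt (not_lt.2 this.le)
    -- the Vitali covering family
    set t : Set ((Fin n → ℝ) × ℝ) := {p | 0 < p.2 ∧ p.2 ≤ r/2 ∧
        (euclBall n p.1 p.2 ∩ Metric.closedBall x r).Nonempty ∧
        ENNReal.ofReal lam ^ q * volume (euclBall n p.1 p.2) ≤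
          ∫⁻ y in euclBall n p.1 p.2, (‖f y‖₊ : ℝ≥0∞) ^ q} with htdef
    have hvB0 : ∀ (c : Fin n → ℝ) {ρ : ℝ}, 0 < ρ → volume (euclBall n c ρ) ≠ 0 := by
      intro c ρ hρ
      rw [volume_euclBall c hρ]
      exact mul_ne_zero (by simp only [ne_eq, ENNReal.ofReal_eq_zero, not_le]; positivity) hv00
    have hvBt : ∀ (c : Fin n → ℝ) {ρ : ℝ}, 0 < ρ → volume (euclBall n c ρ) ≠ ∞ := by
      intro c ρ hρ
      rw [volume_euclBall c hρ]
      exact ENNReal.mul_ne_top ENNReal.ofReal_ne_top hv0t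
    have hcover : E ∩ Metric.closedBall x r ⊆ ⋃ p ∈ t, euclBall n p.1 p.2 := by
      rintro y ⟨hyE, hyQ⟩
      simp only [hEdef, mem_setOf_eq, hlMaximal, lt_iSup_iff] at hyE
      obtain ⟨c, ρ, hρ, hmem, hlt⟩ := hyE
      have hρr : ρ < r/2 := hsmall c ρ hρ hlt
      have hcheb : ENNReal.ofReal lam ^ q * volume (euclBall n c ρ) ≤
          ∫⁻ y in euclBall n c ρ, (‖f y‖₊ : ℝ≥0∞) ^ q := by
        refine aux_cheb hq (hvB0 c hρ) (hvBt c hρ) (le_trans hlt.le ?_)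
        have := avg_le_avg_rpow (volume.restrict (euclBall n c ρ)) hq
          (g := fun y => (‖f y‖₊ : ℝ≥0∞)) hf.nnnorm.coe_nnreal_ennreal.aemeasurable
          (by rw [Measure.restrict_apply_univ]; exact hvB0 c hρ)
          (by rw [Measure.restrict_apply_univ]; exact hvBt c hρ)
        rw [Measure.restrict_apply_univ] at this
        exact this
      exact mem_biUnion (⟨hρ, hρr.le, ⟨y, hmem, hyQ⟩, hcheb⟩ :
        (c, ρ) ∈ t) hmem
    obtain ⟨u, hut, hdisj, hcov⟩ :=
      Vitali.exists_disjoint_subfamily_covering_enlargement_closedBall t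
        (fun p => toE n p.1) (fun p => p.2) (r/2) (fun p hp => hp.2.1) 4 (by norm_num)
    have hucnt : u.Countable := by
      refine Set.PairwiseDisjoint.countable_of_nonempty_interior hdisj fun p hp => ?_
      have hp2 : 0 < p.2 := (hut hp).1
      exact ⟨toE n p.1, Metric.ball_subset_interior_closedBall (Metric.mem_ball_self hp2)⟩
    have hcov2 : E ∩ Metric.closedBall x r ⊆ ⋃ b ∈ u, eCB n b.1 (4 * b.2) := by
      intro y hy
      obtain ⟨p, hpt, hyp⟩ := mem_iUnion₂.1 (hcover hy)
      obtain ⟨b, hbu, hsub⟩ := hcov p hpt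
      refine mem_biUnion hbu ?_
      exact hsub (euclBall_subset_eCB p.1 p.2 hyp)
    haveI : Countable u := hucnt.to_subtype
    have hdisj2 : Pairwise (Function.onFun Disjoint
        fun b : u => euclBall n (b : (Fin n → ℝ) × ℝ).1 (b : (Fin n → ℝ) × ℝ).2) := by
      intro b b' hbb'
      have hne : (b : (Fin n → ℝ) × ℝ) ≠ (b' : (Fin n → ℝ) × ℝ) :=
        fun h => hbb' (Subtype.ext h)
      have hD := hdisj b.2 b'.2 hne
      exact (hD.preimage (toE n)).mono (euclBall_subset_eCB _ _) (euclBall_subset_eCB _ _)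
    have hBsubQ2 : ∀ b : (Fin n → ℝ) × ℝ, b ∈ u →
        euclBall n b.1 b.2 ⊆ Metric.closedBall x (2*r) := by
      intro b hbu z hz
      obtain ⟨hb2, hbr, ⟨w, hw1, hw2⟩, -⟩ := hut hbu
      have h1 : dist z b.1 ≤ b.2 := (dist_le_sqrtSum z b.1).trans (le_of_lt hz)
      have h2 : dist b.1 w ≤ b.2 := by
        rw [dist_comm]
        exact (dist_le_sqrtSum w b.1).trans (le_of_lt hw1)
      have h3 : dist w x ≤ r := Metric.mem_closedBall.1 hw2
      have h4 := dist_triangle4 z b.1 w x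
      rw [Metric.mem_closedBall]
      linarith
    have hsum1 : volume (E ∩ Metric.closedBall x r) ≤
        ∑' b : u, volume (eCB n (b : (Fin n → ℝ) × ℝ).1 (4 * (b : (Fin n → ℝ) × ℝ).2)) :=
      (measure_mono hcov2).trans (measure_biUnion_le volume hucnt _)
    have hsum2 : ∑' b : u, volume (eCB n (b : (Fin n → ℝ) × ℝ).1 (4 * (b : (Fin n → ℝ) × ℝ).2))
        = ENNReal.ofReal ((4:ℝ)^n) *
          ∑' b : u, volume (euclBall n (b : (Fin n → ℝ) × ℝ).1 (b : (Fin n → ℝ) × ℝ).2) := by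
      rw [← ENNReal.tsum_mul_left]
      refine tsum_congr fun b => ?_
      have hb2 : 0 < (b : (Fin n → ℝ) × ℝ).2 := (hut b.2).1
      rw [volume_eCB _ (by positivity), volume_euclBall _ hb2, mul_pow,
        ENNReal.ofReal_mul (by positivity), mul_assoc]
    have hsum3 : ENNReal.ofReal lam ^ q *
        ∑' b : u, volume (euclBall n (b : (Fin n → ℝ) × ℝ).1 (b : (Fin n → ℝ) × ℝ).2) ≤
        ∫⁻ y in Metric.closedBall x (2*r), (‖f y‖₊ : ℝ≥0∞) ^ q := by
      rw [← ENNReal.tsum_mul_left]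
      have step : ∑' b : u, ENNReal.ofReal lam ^ q *
          volume (euclBall n (b : (Fin n → ℝ) × ℝ).1 (b : (Fin n → ℝ) × ℝ).2) ≤
          ∑' b : u, ∫⁻ y in euclBall n (b : (Fin n → ℝ) × ℝ).1 (b : (Fin n → ℝ) × ℝ).2,
            (‖f y‖₊ : ℝ≥0∞) ^ q :=
        ENNReal.tsum_le_tsum fun b => (hut b.2).2.2.2
      refine step.trans ?_
      rw [← lintegral_iUnion (fun b => measurableSet_euclBall _ _) hdisj2]
      exact lintegral_mono_set (iUnion_subset fun b => hBsubQ2 _ b.2)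
    have hQ2vol : volume (Metric.closedBall x (2*r)) =
        ENNReal.ofReal ((2:ℝ)^n) * volume (Metric.closedBall x r) := by
      rw [hVQ x (by linarith : (0:ℝ) ≤ 2*r), hVQ x hr.le, ← ENNReal.ofReal_mul (by positivity)]
      congr 1
      rw [← mul_pow]
    have hφ2r : ENNReal.ofReal (φ r) ^ q ≤ ENNReal.ofReal (φ (2*r)) ^ q :=
      ENNReal.rpow_le_rpow (ENNReal.ofReal_le_ofReal (hφm r (2*r) hr (by linarith))) hqpos.le
    have key : (ENNReal.ofReal lam * ENNReal.ofReal (φ r)) ^ q *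
        volume (E ∩ Metric.closedBall x r) ≤
        (ENNReal.ofReal ((8:ℝ) ^ ((n:ℝ)/q)) * N) ^ q * volume (Metric.closedBall x r) := by
      rw [ENNReal.mul_rpow_of_nonneg _ _ hqpos.le, ENNReal.mul_rpow_of_nonneg _ _ hqpos.le]
      have h8 : (ENNReal.ofReal ((8:ℝ) ^ ((n:ℝ)/q))) ^ q = ENNReal.ofReal ((8:ℝ)^n) := by
        rw [ENNReal.ofReal_rpow_of_pos (by positivity)]
        congr 1
        rw [← Real.rpow_natCast (8:ℝ) n, ← Real.rpow_mul (by norm_num : (0:ℝ) ≤ 8),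
          div_mul_cancel₀ _ hqne]
      rw [h8]
      calc ENNReal.ofReal lam ^ q * ENNReal.ofReal (φ r) ^ q *
            volume (E ∩ Metric.closedBall x r)
          ≤ ENNReal.ofReal lam ^ q * ENNReal.ofReal (φ r) ^ q *
            (ENNReal.ofReal ((4:ℝ)^n) *
              ∑' b : u, volume (euclBall n (b : (Fin n → ℝ) × ℝ).1 (b : (Fin n → ℝ) × ℝ).2)) :=
            mul_le_mul_right (hsum1.trans (le_of_eq hsum2)) _
        _ = ENNReal.ofReal ((4:ℝ)^n) * (ENNReal.ofReal (φ r) ^ q *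
            (ENNReal.ofReal lam ^ q *
              ∑' b : u, volume (euclBall n (b : (Fin n → ℝ) × ℝ).1 (b : (Fin n → ℝ) × ℝ).2))) := by
            ring
        _ ≤ ENNReal.ofReal ((4:ℝ)^n) * (ENNReal.ofReal (φ r) ^ q *
            ∫⁻ y in Metric.closedBall x (2*r), (‖f y‖₊ : ℝ≥0∞) ^ q) :=
            mul_le_mul_right (mul_le_mul_right hsum3 _) _
        _ ≤ ENNReal.ofReal ((4:ℝ)^n) * (ENNReal.ofReal (φ (2*r)) ^ q *
            ∫⁻ y in Metric.closedBall x (2*r), (‖f y‖₊ : ℝ≥0∞) ^ q) :=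
            mul_le_mul_right (mul_le_mul_left hφ2r _) _
        _ ≤ ENNReal.ofReal ((4:ℝ)^n) * (N ^ q * volume (Metric.closedBall x (2*r))) :=
            mul_le_mul_right (hNq x (2*r) (by linarith)) _
        _ = ENNReal.ofReal ((8:ℝ)^n) * N ^ q * volume (Metric.closedBall x r) := by
            rw [hQ2vol]
            have h48 : ENNReal.ofReal ((2:ℝ)^n) * ENNReal.ofReal ((4:ℝ)^n) =
                ENNReal.ofReal ((8:ℝ)^n) := by
              rw [← ENNReal.ofReal_mul (by positivity)]
              congr 1
              rw [← mul_pow]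
              norm_num
            calc ENNReal.ofReal ((4:ℝ)^n) * (N ^ q *
                  (ENNReal.ofReal ((2:ℝ)^n) * volume (Metric.closedBall x r)))
                = (ENNReal.ofReal ((2:ℝ)^n) * ENNReal.ofReal ((4:ℝ)^n)) * N ^ q *
                  volume (Metric.closedBall x r) := by ring
              _ = ENNReal.ofReal ((8:ℝ)^n) * N ^ q * volume (Metric.closedBall x r) := by
                  rw [h48]
    have hfin := aux_avg_pow hq hQ0 hQt key
    calc ENNReal.ofReal lam * (ENNReal.ofReal (φ r) *
          ((volume (Metric.closedBall x r))⁻¹ * volume (E ∩ Metric.closedBall x r)) ^ (1/q))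
        = (ENNReal.ofReal lam * ENNReal.ofReal (φ r)) *
          ((volume (Metric.closedBall x r))⁻¹ * volume (E ∩ Metric.closedBall x r)) ^ (1/q) := by
          ring
      _ ≤ ENNReal.ofReal ((8:ℝ) ^ ((n:ℝ)/q)) * N := hfin
      _ ≤ ENNReal.ofReal C * N := by
          refine mul_le_mul_left (ENNReal.ofReal_le_ofReal ?_) _
          rw [hCdef]
          linarith
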